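/- Let μ be the product over σ ∈ E of the uniform probability measure on [0,1] ⊂ ℝ, and for ω ∈ [0,1]^E define L(ω) = ∫₀¹ (κ − r({σ ∈ E : ω(σ) ≤ s})) ds, the lifetime sum of the (ℓ−1)-st reduced persistent homology of the ℓ-Bernoulli cell complex process on X. Then ∫ L dμ = ∫₀¹ ((1−t)/t) · T_x(1/t, 1/(1−t)) / T(1/t, 1/(1−t)) dt. -/

import Mathlib

open Finset MeasureTheory

-- Sum over all subsets of x^|F| equals (x+1)^n
lemma stmt8_sum_pow_card {E : Type*} [Fintype E] [DecidableEq E] (x : ℝ) :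
    ∑ F : Finset E, x ^ F.card = (x + 1) ^ Fintype.card E := by
  have h := Finset.prod_add (fun _ : E => x) (fun _ : E => 1) Finset.univ
  simp only [Finset.prod_const, one_pow, mul_one, Finset.card_univ] at h
  rw [h, Finset.powerset_univ]

-- pointwise representation
lemma stmt8_rep {E : Type*} [Fintype E] [DecidableEq E] (c : Finset E → ℝ) (G : Finset E) :
    c G = ∑ F : Finset E, if G = F then c F else 0 := by
  rw [Finset.sum_ite_eq]; simp

-- event as a box
lemma stmt8_event_eq {E : Type*} [Fintype E] [DecidableEq E] (F : Finset E) (s : ℝ) :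
    {ω : E → ℝ | (Finset.univ.filter fun σ => ω σ ≤ s) = F}
      = Set.univ.pi (fun σ => if σ ∈ F then Set.Iic s else (Set.Iic s)ᶜ) := by
  ext ω
  simp only [Set.mem_setOf_eq, Set.mem_pi, Set.mem_univ, forall_true_left, Finset.ext_iff,
    Finset.mem_filter, Finset.mem_univ, true_and]
  refine forall_congr' fun σ => ?_
  by_cases hσ : σ ∈ F <;> simp [hσ]

lemma stmt8_event_meas {E : Type*} [Fintype E] [DecidableEq E] (F : Finset E) (s : ℝ) :
    MeasurableSet {ω : E → ℝ | (Finset.univ.filter fun σ => ω σ ≤ s) = F} := by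
  rw [stmt8_event_eq]
  exact MeasurableSet.univ_pi fun σ => by
    by_cases hσ : σ ∈ F <;> simp [hσ, measurableSet_Iic, measurableSet_Iic.compl]

lemma stmt8_event_measure {E : Type*} [Fintype E] [DecidableEq E] (F : Finset E) {s : ℝ}
    (h0 : 0 ≤ s) (h1 : s ≤ 1) :
    (Measure.pi fun _ : E => volume.restrict (Set.Icc (0:ℝ) 1))
        {ω : E → ℝ | (Finset.univ.filter fun σ => ω σ ≤ s) = F}
      = ENNReal.ofReal (s ^ F.card * (1 - s) ^ (Fintype.card E - F.card)) := by
  rw [stmt8_event_eq, Measure.pi_pi]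
  have hIic : (volume.restrict (Set.Icc (0:ℝ) 1)) (Set.Iic s) = ENNReal.ofReal s := by
    rw [Measure.restrict_apply measurableSet_Iic]
    have : Set.Iic s ∩ Set.Icc (0:ℝ) 1 = Set.Icc 0 s := by
      ext x
      simp only [Set.mem_inter_iff, Set.mem_Iic, Set.mem_Icc]
      constructor
      · rintro ⟨hx, hx0, _⟩; exact ⟨hx0, hx⟩
      · rintro ⟨hx0, hx⟩; exact ⟨hx, hx0, le_trans hx h1⟩
    rw [this, Real.volume_Icc, sub_zero]
  have hIicC : (volume.restrict (Set.Icc (0:ℝ) 1)) (Set.Iic s)ᶜ = ENNReal.ofReal (1 - s) := by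
    rw [Measure.restrict_apply measurableSet_Iic.compl]
    have : (Set.Iic s)ᶜ ∩ Set.Icc (0:ℝ) 1 = Set.Ioc s 1 := by
      ext x
      simp only [Set.mem_inter_iff, Set.mem_compl_iff, Set.mem_Iic, Set.mem_Icc, Set.mem_Ioc,
        not_le]
      constructor
      · rintro ⟨hx, _, hx1⟩; exact ⟨hx, hx1⟩
      · rintro ⟨hx, hx1⟩; exact ⟨hx, le_trans h0 hx.le, hx1⟩
    rw [this, Real.volume_Ioc]
  have : ∀ σ : E, (volume.restrict (Set.Icc (0:ℝ) 1))
      (if σ ∈ F then Set.Iic s else (Set.Iic s)ᶜ)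
      = if σ ∈ F then ENNReal.ofReal s else ENNReal.ofReal (1 - s) := by
    intro σ
    by_cases hσ : σ ∈ F
    · rw [if_pos hσ, if_pos hσ, hIic]
    · rw [if_neg hσ, if_neg hσ, hIicC]
  rw [Finset.prod_congr rfl fun σ _ => this σ]
  rw [Finset.prod_ite, Finset.prod_const, Finset.prod_const]
  have h1' : Finset.univ.filter (fun σ => σ ∈ F) = F := by
    ext σ; simp
  have h2' : (Finset.univ.filter (fun σ => ¬ σ ∈ F)).card = Fintype.card E - F.card := by
    rw [Finset.filter_not, Finset.filter_mem_eq_inter, Finset.univ_inter]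
    simp [Finset.card_sdiff_of_subset (Finset.subset_univ F), Finset.card_univ]
  rw [h1', h2', ← ENNReal.ofReal_pow h0, ← ENNReal.ofReal_pow (by linarith),
    ← ENNReal.ofReal_mul (by positivity)]

lemma stmt8_alg {E : Type*} [Fintype E] [DecidableEq E] (r : Finset E → ℕ) (κ : ℕ)
    (hrκ : ∀ F : Finset E, r F ≤ κ) (hrc : ∀ F : Finset E, r F ≤ F.card)
    {t : ℝ} (ht0 : 0 < t) (ht1 : t < 1) :
    (1 - t) / t *
        (∑ F : Finset E, ((κ - r F : ℕ) : ℝ) * (1 / t - 1) ^ (κ - r F - 1)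
          * (1 / (1 - t) - 1) ^ (F.card - r F)) /
        (∑ F : Finset E, (1 / t - 1) ^ (κ - r F) * (1 / (1 - t) - 1) ^ (F.card - r F))
      = ∑ F : Finset E, ((κ : ℝ) - r F) * t ^ F.card
          * (1 - t) ^ (Fintype.card E - F.card) := by
  have h1t : (0:ℝ) < 1 - t := by linarith
  set a : ℝ := (1 - t) / t with ha_def
  set b : ℝ := t / (1 - t) with hb_def
  have ha : 0 < a := by positivity
  have hb : 0 < b := by positivity
  have hab : a * b = 1 := by rw [ha_def, hb_def]; field_simp
  have hxa : 1 / t - 1 = a := by rw [ha_def, sub_div, div_self ht0.ne']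
  have hyb : 1 / (1 - t) - 1 = b := by
    rw [hb_def, eq_div_iff h1t.ne']
    field_simp
    ring
  have hb1 : (b + 1) * (1 - t) = 1 := by rw [hb_def]; field_simp; ring
  have hbt : ∀ k : ℕ, k ≤ Fintype.card E →
      b ^ k * (1 - t) ^ Fintype.card E = t ^ k * (1 - t) ^ (Fintype.card E - k) := by
    intro k hk
    have : (1 - t) ^ Fintype.card E = (1 - t) ^ k * (1 - t) ^ (Fintype.card E - k) := by
      rw [← pow_add, Nat.add_sub_cancel' hk]
    have hne : (1 - t) ^ k ≠ 0 := pow_ne_zero _ h1t.ne'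
    rw [this, hb_def, div_pow]
    field_simp
  -- value of T
  have hT : (∑ F : Finset E, a ^ (κ - r F) * b ^ (F.card - r F))
      = a ^ κ * (b + 1) ^ Fintype.card E := by
    rw [← stmt8_sum_pow_card (E := E) b, Finset.mul_sum]
    refine Finset.sum_congr rfl fun F _ => ?_
    have key : a ^ (κ - r F) * b ^ (F.card - r F) * (a * b) ^ (r F)
        = a ^ κ * b ^ F.card := by
      rw [mul_pow]
      have h1 : a ^ (κ - r F) * a ^ (r F) = a ^ κ := by
        rw [← pow_add, Nat.sub_add_cancel (hrκ F)]
      have h2 : b ^ (F.card - r F) * b ^ (r F) = b ^ F.card := by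
        rw [← pow_add, Nat.sub_add_cancel (hrc F)]
      rw [← h1, ← h2]; ring
    rw [hab, one_pow, mul_one] at key
    rw [key]
  -- value of Tx
  have hTx : (∑ F : Finset E, ((κ - r F : ℕ) : ℝ) * a ^ (κ - r F - 1) * b ^ (F.card - r F))
      = a ^ (κ - 1) * ∑ F : Finset E, ((κ : ℝ) - r F) * b ^ F.card := by
    rw [Finset.mul_sum]
    refine Finset.sum_congr rfl fun F _ => ?_
    rcases eq_or_lt_of_le (hrκ F) with heq | hlt
    · simp [heq]
    · have hcast : ((κ - r F : ℕ) : ℝ) = (κ : ℝ) - r F := by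
        rw [Nat.cast_sub (hrκ F)]
      have hle1 : r F ≤ κ - 1 := Nat.le_sub_one_of_lt hlt
      have key : a ^ (κ - r F - 1) * b ^ (F.card - r F) * (a * b) ^ (r F)
          = a ^ (κ - 1) * b ^ F.card := by
        rw [mul_pow]
        have h1 : a ^ (κ - r F - 1) * a ^ (r F) = a ^ (κ - 1) := by
          rw [← pow_add, Nat.sub_right_comm, Nat.sub_add_cancel hle1]
        have h2 : b ^ (F.card - r F) * b ^ (r F) = b ^ F.card := by
          rw [← pow_add, Nat.sub_add_cancel (hrc F)]
        rw [← h1, ← h2]; ring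
      rw [hab, one_pow, mul_one] at key
      rw [hcast, mul_assoc, key]; ring
  rw [hxa, hyb, hT, hTx]
  -- RHS in terms of b
  have hRHS : (∑ F : Finset E, ((κ : ℝ) - r F) * t ^ F.card
        * (1 - t) ^ (Fintype.card E - F.card))
      = (∑ F : Finset E, ((κ : ℝ) - r F) * b ^ F.card) * (1 - t) ^ Fintype.card E := by
    rw [Finset.sum_mul]
    refine Finset.sum_congr rfl fun F _ => ?_
    rw [mul_assoc, mul_assoc, hbt F.card ((Finset.card_le_univ F).trans_eq Finset.card_univ)]
  rw [hRHS]
  set S : ℝ := ∑ F : Finset E, ((κ : ℝ) - r F) * b ^ F.card with hS_def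
  rcases Nat.eq_zero_or_pos κ with hκ0 | hκpos
  · have hS0 : S = 0 := by
      rw [hS_def]
      refine Finset.sum_eq_zero fun F _ => ?_
      have : r F = 0 := Nat.le_zero.mp (hκ0 ▸ hrκ F)
      simp [this, hκ0]
    rw [hS0]; simp
  · have hκ1 : κ - 1 + 1 = κ := Nat.sub_add_cancel hκpos
    have hbn : (b + 1) ^ Fintype.card E * (1 - t) ^ Fintype.card E = 1 := by
      rw [← mul_pow, hb1, one_pow]
    have haκ : a ^ κ ≠ 0 := pow_ne_zero _ ha.ne'
    have hbκ : (b + 1) ^ Fintype.card E ≠ 0 := pow_ne_zero _ (by positivity)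
    rw [div_eq_iff (by exact mul_ne_zero haκ hbκ)]
    have : (1 - t) / t * (a ^ (κ - 1) * S) = a ^ κ * S := by
      rw [← ha_def, ← mul_assoc, ← pow_succ', hκ1]
    rw [this]
    calc a ^ κ * S = a ^ κ * S * 1 := by ring
      _ = a ^ κ * S * ((b + 1) ^ Fintype.card E * (1 - t) ^ Fintype.card E) := by rw [hbn]
      _ = S * (1 - t) ^ Fintype.card E * (a ^ κ * (b + 1) ^ Fintype.card E) := by ring

theorem stmt_8 {K : Type*} [Field K] {E : Type*} [Fintype E] [DecidableEq E]
    {V : Type*} [AddCommGroup V] [Module K V] [FiniteDimensional K V]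
    (bdry : (E → K) →ₗ[K] V)
    (r : Finset E → ℕ)
    (hr : ∀ F : Finset E, r F = Module.finrank K (Submodule.span K
      ((fun σ => bdry (Pi.single σ 1)) '' (F : Set E))))
    (κ : ℕ) (hκ : r Finset.univ ≤ κ)
    (T Tx : ℝ → ℝ → ℝ)
    (hT : ∀ x y : ℝ, T x y =
      ∑ F : Finset E, (x - 1) ^ (κ - r F) * (y - 1) ^ (F.card - r F))
    (hTx : ∀ x y : ℝ, Tx x y =
      ∑ F : Finset E,
        (κ - r F : ℕ) * (x - 1) ^ (κ - r F - 1) * (y - 1) ^ (F.card - r F))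
    (L : (E → ℝ) → ℝ)
    (hL : ∀ ω : E → ℝ, L ω =
      ∫ s in (0 : ℝ)..1,
        ((κ : ℝ) - (r (Finset.univ.filter fun σ => ω σ ≤ s) : ℕ))) :
    (∫ ω : E → ℝ, L ω
        ∂(Measure.pi fun _ : E => volume.restrict (Set.Icc (0 : ℝ) 1))) =
      ∫ t in (0 : ℝ)..1,
        (1 - t) / t * Tx (1 / t) (1 / (1 - t)) / T (1 / t) (1 / (1 - t)) := by
  classical
  -- rank facts
  have hrκ' : ∀ F : Finset E, r F ≤ κ := by
    intro F
    refine le_trans ?_ hκ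
    rw [hr F, hr Finset.univ]
    exact Submodule.finrank_mono (Submodule.span_mono
      (Set.image_mono (by simp)))
  have hrc : ∀ F : Finset E, r F ≤ F.card := by
    intro F
    rw [hr F]
    have himg : ((fun σ => bdry (Pi.single σ 1)) '' (F : Set E))
        = ↑(F.image fun σ => bdry (Pi.single σ 1)) := (Finset.coe_image).symm
    rw [himg]
    exact le_trans (finrank_span_finset_le_card _) Finset.card_image_le
  set μ : Measure (E → ℝ) :=
    Measure.pi fun _ : E => volume.restrict (Set.Icc (0 : ℝ) 1) with hμ
  haveI : IsProbabilityMeasure μ := by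
    constructor
    rw [hμ, ← Set.pi_univ Set.univ, Measure.pi_pi]
    simp
  haveI : IsFiniteMeasure (volume.restrict (Set.Ioc (0:ℝ) 1)) := by
    constructor
    rw [Measure.restrict_apply_univ, Real.volume_Ioc]
    exact ENNReal.ofReal_lt_top
  set n := Fintype.card E with hn
  -- inner integral at a fixed time s
  have hinner : ∀ s : ℝ, 0 ≤ s → s ≤ 1 →
      (∫ ω, ((κ : ℝ) - (r (Finset.univ.filter fun σ => ω σ ≤ s) : ℕ)) ∂μ)
        = ∑ F : Finset E, ((κ : ℝ) - r F) * s ^ F.card * (1 - s) ^ (n - F.card) := by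
    intro s h0 h1
    have hrep : (fun ω : E → ℝ =>
        ((κ : ℝ) - (r (Finset.univ.filter fun σ => ω σ ≤ s) : ℕ)))
        = fun ω => ∑ F : Finset E,
            Set.indicator {ω : E → ℝ | (Finset.univ.filter fun σ => ω σ ≤ s) = F}
              (fun _ => ((κ : ℝ) - r F)) ω := by
      funext ω
      have := stmt8_rep (fun F : Finset E => ((κ : ℝ) - r F))
        (Finset.univ.filter fun σ => ω σ ≤ s)
      rw [this]
      refine Finset.sum_congr rfl fun F _ => ?_
      rw [Set.indicator_apply]
      simp only [Set.mem_setOf_eq]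
    rw [hrep, integral_finset_sum _
      (fun F _ => (integrable_const _).indicator (stmt8_event_meas F s))]
    refine Finset.sum_congr rfl fun F _ => ?_
    rw [integral_indicator_const _ (stmt8_event_meas F s), measureReal_def,
      stmt8_event_measure F h0 h1,
      ENNReal.toReal_ofReal (mul_nonneg (pow_nonneg h0 _) (pow_nonneg (by linarith) _)),
      smul_eq_mul, ← hn]
    ring
  -- integrability on the product space
  have hint : Integrable (Function.uncurry fun (ω : E → ℝ) (s : ℝ) =>
      ((κ : ℝ) - (r (Finset.univ.filter fun σ => ω σ ≤ s) : ℕ)))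
      (μ.prod (volume.restrict (Set.Ioc (0:ℝ) 1))) := by
    have hPmeas : ∀ F : Finset E, MeasurableSet
        {z : (E → ℝ) × ℝ | (Finset.univ.filter fun σ => z.1 σ ≤ z.2) = F} := by
      intro F
      have hset : {z : (E → ℝ) × ℝ | (Finset.univ.filter fun σ => z.1 σ ≤ z.2) = F}
          = ⋂ σ : E, (if σ ∈ F then {z : (E → ℝ) × ℝ | z.1 σ ≤ z.2}
              else {z : (E → ℝ) × ℝ | z.1 σ ≤ z.2}ᶜ) := by
        ext z
        simp only [Set.mem_setOf_eq, Set.mem_iInter, Finset.ext_iff, Finset.mem_filter,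
          Finset.mem_univ, true_and]
        refine forall_congr' fun σ => ?_
        by_cases hσ : σ ∈ F <;> simp [hσ]
      rw [hset]
      refine MeasurableSet.iInter fun σ => ?_
      have hm : MeasurableSet {z : (E → ℝ) × ℝ | z.1 σ ≤ z.2} :=
        measurableSet_le measurable_fst.eval measurable_snd
      by_cases hσ : σ ∈ F
      · rw [if_pos hσ]; exact hm
      · rw [if_neg hσ]; exact hm.compl
    have hrep : (Function.uncurry fun (ω : E → ℝ) (s : ℝ) =>
        ((κ : ℝ) - (r (Finset.univ.filter fun σ => ω σ ≤ s) : ℕ)))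
        = fun z : (E → ℝ) × ℝ => ∑ F : Finset E,
            Set.indicator {z : (E → ℝ) × ℝ | (Finset.univ.filter fun σ => z.1 σ ≤ z.2) = F}
              (fun _ => ((κ : ℝ) - r F)) z := by
      funext z
      have := stmt8_rep (fun F : Finset E => ((κ : ℝ) - r F))
        (Finset.univ.filter fun σ => z.1 σ ≤ z.2)
      rw [Function.uncurry, this]
      refine Finset.sum_congr rfl fun F _ => ?_
      rw [Set.indicator_apply]
      simp only [Set.mem_setOf_eq]
    rw [hrep]
    exact integrable_finset_sum _
      (fun F _ => (integrable_const _).indicator (hPmeas F))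
  -- LHS
  have hLHS : (∫ ω, L ω ∂μ) = ∫ s in Set.Ioo (0:ℝ) 1,
      (∑ F : Finset E, ((κ : ℝ) - r F) * s ^ F.card * (1 - s) ^ (n - F.card)) := by
    calc (∫ ω, L ω ∂μ)
        = ∫ ω, (∫ s in Set.Ioc (0:ℝ) 1,
            ((κ : ℝ) - (r (Finset.univ.filter fun σ => ω σ ≤ s) : ℕ))) ∂μ := by
          refine integral_congr_ae (Filter.Eventually.of_forall fun ω => ?_)
          rw [hL ω, intervalIntegral.integral_of_le zero_le_one]
      _ = ∫ s in Set.Ioc (0:ℝ) 1,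
            (∫ ω, ((κ : ℝ) - (r (Finset.univ.filter fun σ => ω σ ≤ s) : ℕ)) ∂μ) :=
          integral_integral_swap hint
      _ = ∫ s in Set.Ioo (0:ℝ) 1,
            (∫ ω, ((κ : ℝ) - (r (Finset.univ.filter fun σ => ω σ ≤ s) : ℕ)) ∂μ) :=
          integral_Ioc_eq_integral_Ioo
      _ = _ := setIntegral_congr_fun measurableSet_Ioo
          (fun s hs => hinner s hs.1.le hs.2.le)
  rw [hLHS, intervalIntegral.integral_of_le zero_le_one, integral_Ioc_eq_integral_Ioo]
  refine (setIntegral_congr_fun measurableSet_Ioo fun t ht => ?_).symm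
  rw [hT, hTx]
  exact stmt8_alg r κ hrκ' hrc ht.1 ht.2
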